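/- Let f: Σ → ℝ^d be continuous and α ∈ ℝ^d. If X_α ∩ Σ̃ ≠ ∅, then there exists μ ∈ M(Σ,σ) such that ∫ f dμ = α and λ(μ,σ) > 0. -/

import Mathlib

open MeasureTheory Set Filter Topology

noncomputable section

/-- A finite measurable partition of the space. -/
def IsMeasPartition {X : Type*} [MeasurableSpace X] (P : Finset (Set X)) : Prop :=
  (∀ s ∈ P, MeasurableSet s) ∧ ((P : Set (Set X)).PairwiseDisjoint id) ∧ (⋃ s ∈ P, s) = univ

/-- Shannon entropy of the refinement `⋁_{i<n} T^{-i} P` of a finite partition `P`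
under the first `n` iterates of `T`, with respect to the measure `μ`. -/
def partEntropy {X : Type*} [MeasurableSpace X] (T : X → X) (μ : Measure X)
    (P : Finset (Set X)) (n : ℕ) : ℝ :=
  ∑ c : Fin n → {s // s ∈ P},
    Real.negMulLog (μ (⋂ i : Fin n, T^[(i : ℕ)] ⁻¹' ((c i : Set X)))).toReal

/-- The Kolmogorov–Sinai (metric) entropy of the measure `μ` for the map `T`:
the supremum over finite measurable partitions `P` of
`lim_n (1/n) H(⋁_{i<n} T^{-i}P)`, the limit being computed as an infimum (by
subadditivity of the entropy sequence). -/
def metricEntropy {X : Type*} [MeasurableSpace X] (T : X → X) (μ : Measure X) : ℝ :=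
  ⨆ P : {P : Finset (Set X) // IsMeasPartition P},
    ⨅ n : ℕ, partEntropy T μ (P : Finset (Set X)) (n + 1) / (n + 1)

/-- Birkhoff (ergodic) average `A_n f(x) = (1/n) ∑_{j<n} f(T^j x)`. -/
def birkhoff {X E : Type*} [AddCommMonoid E] [Module ℝ E]
    (T : X → X) (f : X → E) (n : ℕ) (x : X) : E :=
  (n : ℝ)⁻¹ • ∑ j ∈ Finset.range n, f (T^[j] x)

/-- The full shift space `Σ = {1,…,m}^ℕ`. -/
abbrev SymbSp (m : ℕ) := ℕ → Fin m

/-- The shift map `σ` on `Σ`. -/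
def shift {m : ℕ} (ω : SymbSp m) : SymbSp m := fun n => ω (n + 1)

/-- The set `M(Σ,σ)` of shift-invariant Borel probability measures on `Σ`. -/
def shiftInvMeasures (m : ℕ) : Set (Measure (SymbSp m)) :=
  {μ | IsProbabilityMeasure μ ∧ μ.map shift = μ}

/-- The level set `X_α = {ω ∈ Σ : lim_n A_n f(ω) = α}` of a potential `f` on `Σ`. -/
def symbLevelSet {m : ℕ} {E : Type*} [AddCommMonoid E] [Module ℝ E] [TopologicalSpace E]
    (f : SymbSp m → E) (α : E) : Set (SymbSp m) :=
  {ω | Tendsto (fun n => birkhoff shift f n ω) atTop (𝓝 α)}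

/-- A piecewise `C¹` expanding (possibly non-uniformly hyperbolic) interval map:
`m` pairwise non-overlapping subintervals `I 1, …, I m` of `[0,1]`, a map `T` which
restricted to each `I i` is a `C¹` surjection onto `[0,1]` (with derivative `T'`),
a unique fixed point `fixPt i` of `T` in each `I i`, and `T' > 1` away from the
fixed points. -/
structure PCSystem (m : ℕ) where
  hm : 0 < m
  I : Fin m → Set ℝ
  T : ℝ → ℝ
  T' : ℝ → ℝ
  fixPt : Fin m → ℝ
  hI : ∀ i, ∃ a b : ℝ, a < b ∧ I i = Icc a b
  hIsub : ∀ i, I i ⊆ Icc 0 1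
  hdisj : ∀ i j, i ≠ j → Disjoint (interior (I i)) (interior (I j))
  hTmeas : Measurable T
  hT'meas : Measurable T'
  hmapsto : ∀ i, MapsTo T (I i) (Icc 0 1)
  hsurj : ∀ i, SurjOn T (I i) (Icc 0 1)
  hderiv : ∀ i, ∀ x ∈ I i, HasDerivWithinAt T (T' x) (I i) x
  hT'cont : ∀ i, ContinuousOn T' (I i)
  hfixmem : ∀ i, fixPt i ∈ I i
  hfix : ∀ i, T (fixPt i) = fixPt i
  hfixuniq : ∀ i, ∀ y ∈ I i, T y = y → y = fixPt i
  hexp : ∀ y ∈ ⋃ i, I i, y ∉ range fixPt → 1 < T' y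

namespace PCSystem

variable {m : ℕ} (S : PCSystem m)

/-- The attractor `Λ = {x ∈ ⋃ I_i : T^n x ∈ [0,1] for all n}`. -/
def attractor : Set ℝ :=
  {x | (x ∈ ⋃ i, S.I i) ∧ ∀ n : ℕ, S.T^[n] x ∈ Icc (0:ℝ) 1}

/-- The basic interval `I_w = T_{w₁}∘⋯∘T_{wₙ}([0,1])` coded by the word `w`,
described via the forward map: `I_{i·w} = I_i ∩ T⁻¹(I_w)`. -/
def cyl (S : PCSystem m) : List (Fin m) → Set ℝ
  | [] => Icc 0 1
  | i :: w => S.I i ∩ S.T ⁻¹' (cyl S w)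

end PCSystem

/-- The word `ω₁…ωₙ` of the first `n` symbols of `ω`. -/
def word {m : ℕ} (ω : SymbSp m) (n : ℕ) : List (Fin m) := List.ofFn fun j : Fin n => ω j

namespace PCSystem

variable {m : ℕ} (S : PCSystem m)

/-- The coding map `Π : Σ → Λ`, `Π(ω) = lim_n T_{ω₁}∘⋯∘T_{ωₙ}([0,1])`
(realized as the supremum of the nested intersection `⋂_n I_{ω|_n}`, which is
a single point). -/
def code (ω : SymbSp m) : ℝ := sSup (⋂ n : ℕ, S.cyl (word ω n))

/-- The geometric potential `g(ω) = −log T'_{ω₁}(Π(σω)) = log T'(Π(ω))`. -/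
def g (ω : SymbSp m) : ℝ := Real.log (S.T' (S.code ω))

/-- `Σ̃ = {ω : liminf_n A_n g(ω) > 0}`. -/
def SigmaTilde : Set (SymbSp m) :=
  {ω | 0 < atTop.liminf fun n => birkhoff shift S.g n ω}

/-- The set `M(Λ,T)` of `T`-invariant Borel probability measures on the attractor `Λ`. -/
def invMeasures : Set (Measure ℝ) :=
  {μ | IsProbabilityMeasure μ ∧ μ.map S.T = μ ∧ μ S.attractorᶜ = 0}

/-- Lyapunov exponent `λ(μ,T) = ∫ log|T'| dμ` of a measure on the attractor. -/
def lyap (μ : Measure ℝ) : ℝ := ∫ x, Real.log |S.T' x| ∂μ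

/-- Lyapunov exponent `λ(μ,σ) = ∫ g dμ` of a measure on the shift space. -/
def lyapSymb (μ : Measure (SymbSp m)) : ℝ := ∫ ω, S.g ω ∂μ

/-- The set of parabolic fixed points, i.e. those fixed points `x_j` with `T'(x_j) = 1`. -/
def parabolicSet : Set ℝ := {y | ∃ i, y = S.fixPt i ∧ S.T' y = 1}

/-- The level set `Λ_α = {x ∈ Λ : lim_n (1/n)∑_{j<n} F(T^j x) = α}`. -/
def levelSet {E : Type*} [AddCommMonoid E] [Module ℝ E] [TopologicalSpace E]
    (F : ℝ → E) (α : E) : Set ℝ :=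
  {x | x ∈ S.attractor ∧ Tendsto (fun n => birkhoff S.T F n x) atTop (𝓝 α)}

/-- `Λ̃`: the set of points of the attractor having exactly two codings. -/
def doubleCoded : Set ℝ := {x | x ∈ S.attractor ∧ (S.code ⁻¹' {x}).ncard = 2}

end PCSystem

namespace PCSystem
variable {m : ℕ} (S : PCSystem m)


lemma T_contOn (i : Fin m) : ContinuousOn S.T (S.I i) :=
  fun x hx => (S.hderiv i x hx).continuousWithinAt

lemma mem_closure_diff_finite {a b : ℝ} (hab : a < b) {F : Set ℝ} (hF : F.Finite)
    {x : ℝ} (hx : x ∈ Icc a b) : x ∈ closure (Icc a b \ F) := by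
  rw [Metric.mem_closure_iff]
  intro ε hε
  rcases lt_or_eq_of_le hx.2 with hxb | hxb
  · have h1 : x < min b (x + ε) := lt_min hxb (by linarith)
    have : (Set.Ioo x (min b (x + ε))).Infinite := Set.infinite_coe_iff.mp (Set.Ioo.infinite h1)
    obtain ⟨y, hy⟩ := (this.diff hF).nonempty
    refine ⟨y, ⟨⟨?_, ?_⟩, hy.2⟩, ?_⟩
    · exact le_trans hx.1 (le_of_lt hy.1.1)
    · exact le_of_lt (lt_of_lt_of_le hy.1.2 (min_le_left _ _))
    · have := lt_of_lt_of_le hy.1.2 (min_le_right _ _)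
      rw [Real.dist_eq, abs_sub_comm, abs_of_pos (by linarith [hy.1.1])]
      linarith [hy.1.1]
  · have h1 : max a (x - ε) < x := by
      exact max_lt (by rw [hxb]; exact hab) (by linarith)
    have : (Set.Ioo (max a (x - ε)) x).Infinite := Set.infinite_coe_iff.mp (Set.Ioo.infinite h1)
    obtain ⟨y, hy⟩ := (this.diff hF).nonempty
    refine ⟨y, ⟨⟨?_, ?_⟩, hy.2⟩, ?_⟩
    · exact le_of_lt (lt_of_le_of_lt (le_max_left _ _) hy.1.1)
    · exact le_trans (le_of_lt hy.1.2) hx.2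
    · have := lt_of_le_of_lt (le_max_right _ _) hy.1.1
      rw [Real.dist_eq, abs_of_pos (by linarith [hy.1.2])]
      linarith [hy.1.2]

lemma T'_ge_one (i : Fin m) : ∀ x ∈ S.I i, 1 ≤ S.T' x := by
  intro x hx
  by_cases hxF : x ∈ range S.fixPt
  · obtain ⟨a, b, hab, hIi⟩ := S.hI i
    have hcl : x ∈ closure (Icc a b \ range S.fixPt) :=
      mem_closure_diff_finite hab (Set.finite_range _) (hIi ▸ hx)
    have hne : (𝓝[Icc a b \ range S.fixPt] x).NeBot :=
      mem_closure_iff_nhdsWithin_neBot.mp hcl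
    have hcw : Tendsto S.T' (𝓝[Icc a b \ range S.fixPt] x) (𝓝 (S.T' x)) := by
      have := (S.hT'cont i x hx).mono (s := Icc a b \ range S.fixPt)
        (by rw [hIi]; exact diff_subset)
      exact this
    refine ge_of_tendsto hcw ?_
    filter_upwards [self_mem_nhdsWithin] with y hy
    exact le_of_lt (S.hexp y (mem_iUnion.2 ⟨i, hIi ▸ hy.1⟩) hy.2)
  · exact le_of_lt (S.hexp x (mem_iUnion.2 ⟨i, hx⟩) hxF)

lemma deriv_eq_T' (i : Fin m) {x : ℝ} (hx : x ∈ interior (S.I i)) :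
    deriv S.T x = S.T' x := by
  exact ((S.hderiv i x (interior_subset hx)).hasDerivAt
    (mem_interior_iff_mem_nhds.mp hx)).deriv

lemma T_expand (i : Fin m) : ∀ x ∈ S.I i, ∀ y ∈ S.I i, x ≤ y →
    y - x ≤ S.T y - S.T x := by
  intro x hx y hy hxy
  obtain ⟨a, b, hab, hIi⟩ := S.hI i
  have hconv : Convex ℝ (S.I i) := hIi ▸ convex_Icc a b
  have hdiff : DifferentiableOn ℝ S.T (interior (S.I i)) := fun z hz =>
    ((S.hderiv i z (interior_subset hz)).hasDerivAt
      (mem_interior_iff_mem_nhds.mp hz)).differentiableAt.differentiableWithinAt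
  have hbound : ∀ z ∈ interior (S.I i), (1:ℝ) ≤ deriv S.T z := fun z hz => by
    rw [S.deriv_eq_T' i hz]; exact S.T'_ge_one i z (interior_subset hz)
  have := hconv.mul_sub_le_image_sub_of_le_deriv (S.T_contOn i) hdiff hbound
    x hx y hy hxy
  linarith

lemma T_monoOn (i : Fin m) : MonotoneOn S.T (S.I i) := fun x hx y hy hxy => by
  have := S.T_expand i x hx y hy hxy; linarith

/-- points of `I i` at distance at least `r` from every fixed point -/
def Dset (i : Fin m) (r : ℝ) : Set ℝ := S.I i ∩ ⋂ j, {x | r ≤ |x - S.fixPt j|}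

lemma exists_egain (r : ℝ) (hr : 0 < r) :
    ∃ e > 0, ∀ i, ∀ x ∈ S.Dset i r, 1 + e ≤ S.T' x := by
  have key : ∀ i : Fin m, ∃ e > (0:ℝ), ∀ x ∈ S.Dset i r, 1 + e ≤ S.T' x := by
    intro i
    by_cases hne : (S.Dset i r).Nonempty
    · obtain ⟨a, b, hab, hIi⟩ := S.hI i
      have hclosed : IsClosed (⋂ j, {x : ℝ | r ≤ |x - S.fixPt j|}) := by
        refine isClosed_iInter fun j => ?_
        have : {x : ℝ | r ≤ |x - S.fixPt j|} = (fun x => |x - S.fixPt j|) ⁻¹' Ici r := rfl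
        rw [this]
        exact IsClosed.preimage (by continuity) isClosed_Ici
      have hcpt : IsCompact (S.Dset i r) := by
        have : IsCompact (S.I i) := hIi ▸ isCompact_Icc
        exact this.inter_right hclosed
      obtain ⟨x₀, hx₀, hmin'⟩ := hcpt.exists_isMinOn hne
        ((S.hT'cont i).mono inter_subset_left)
      have hmin : ∀ x ∈ S.Dset i r, S.T' x₀ ≤ S.T' x := fun x hx => hmin' hx
      have hx₀F : x₀ ∉ range S.fixPt := by
        rintro ⟨j, rfl⟩
        have := mem_iInter.mp hx₀.2 j
        simp only [mem_setOf_eq, sub_self, abs_zero] at this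
        linarith
      have h1 : 1 < S.T' x₀ := S.hexp x₀ (mem_iUnion.2 ⟨i, hx₀.1⟩) hx₀F
      exact ⟨S.T' x₀ - 1, by linarith, fun x hx => by linarith [hmin x hx]⟩
    · exact ⟨1, one_pos, fun x hx => absurd ⟨x, hx⟩ hne⟩
  choose e he hle using key
  have hne : (Finset.univ : Finset (Fin m)).Nonempty := by
    have : Nonempty (Fin m) := ⟨⟨0, S.hm⟩⟩
    exact Finset.univ_nonempty
  refine ⟨Finset.univ.inf' hne e, ?_, fun i x hx => ?_⟩
  · obtain ⟨i, -, hi⟩ := Finset.exists_mem_eq_inf' hne e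
    rw [hi]; exact he i
  · exact le_trans (by linarith [Finset.inf'_le e (Finset.mem_univ i)]) (hle i x hx)

lemma exists_avoid_point (x y : ℝ) {r : ℝ} (hr : 0 < r) (hxy : x + 2*r ≤ y - 2*r)
    (hgap : 4*r*m < (y - 2*r) - (x + 2*r)) (c : Fin m → ℝ) :
    ∃ z ∈ Icc (x + 2*r) (y - 2*r), ∀ j, 2*r ≤ |z - c j| := by
  by_contra hcon
  push_neg at hcon
  have hsub : Icc (x + 2*r) (y - 2*r) ⊆ ⋃ j ∈ (Finset.univ : Finset (Fin m)),
      Metric.ball (c j) (2*r) := by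
    intro z hz
    obtain ⟨j, hj⟩ := hcon z hz
    exact mem_biUnion (Finset.mem_univ j) (by rwa [Metric.mem_ball, Real.dist_eq])
  have hvol := (measure_mono (μ := MeasureTheory.volume) hsub).trans
    (measure_biUnion_finset_le _ _)
  rw [Real.volume_Icc] at hvol
  have hball : ∀ j : Fin m, MeasureTheory.volume (Metric.ball (c j) (2*r))
      = ENNReal.ofReal (4*r) := by
    intro j; rw [Real.volume_ball]; ring_nf
  rw [Finset.sum_congr rfl (fun j _ => hball j), Finset.sum_const, Finset.card_univ,
    Fintype.card_fin, nsmul_eq_mul, ← ENNReal.ofReal_natCast,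
    ← ENNReal.ofReal_mul (by positivity)] at hvol
  rw [ENNReal.ofReal_le_ofReal_iff (by positivity)] at hvol
  nlinarith

lemma expand_gain (ε : ℝ) (hε : 0 < ε) :
    ∃ δ > 0, ∀ i, ∀ x ∈ S.I i, ∀ y ∈ S.I i, x ≤ y → ε ≤ y - x →
      y - x + δ ≤ S.T y - S.T x := by
  set r : ℝ := ε / (8 * (m + 1)) with hrdef
  have hr : 0 < r := by positivity
  obtain ⟨e, he, hle⟩ := S.exists_egain r hr
  refine ⟨e * r, by positivity, fun i x hx y hy hxy hgap => ?_⟩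
  obtain ⟨a, b, hab, hIi⟩ := S.hI i
  have hrε : 8 * (m+1) * r = ε := by
    rw [hrdef]; field_simp
  have hm1 : (1:ℝ) ≤ m + 1 := by have := Nat.cast_nonneg (α:=ℝ) m; linarith
  have hexp8 : 8 * (m:ℝ) * r + 8 * r = ε := by rw [← hrε]; ring
  have hrm : (0:ℝ) ≤ r * m := by positivity
  have h8 : 8 * r ≤ ε := by nlinarith
  obtain ⟨z, hz, hzF⟩ := exists_avoid_point x y hr (by linarith) (by nlinarith) S.fixPt
  -- membership facts
  have haux : ∀ w, x ≤ w → w ≤ y → w ∈ S.I i := by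
    intro w h1 h2
    rw [hIi] at hx hy ⊢
    exact ⟨le_trans hx.1 h1, le_trans h2 hy.2⟩
  have hz1 : z - r ∈ S.I i := haux _ (by linarith [hz.1]) (by linarith [hz.2])
  have hz2 : z + r ∈ S.I i := haux _ (by linarith [hz.1]) (by linarith [hz.2])
  -- middle expansion with gain
  have hmid : (1 + e) * ((z+r) - (z-r)) ≤ S.T (z+r) - S.T (z-r) := by
    have hconv : Convex ℝ (Icc (z-r) (z+r)) := convex_Icc _ _
    have hsubI : Icc (z-r) (z+r) ⊆ S.I i := fun w hw =>
      haux w (by linarith [hz.1, hw.1]) (by linarith [hz.2, hw.2])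
    have hsubint : interior (Icc (z-r) (z+r)) ⊆ interior (S.I i) := by
      rw [interior_Icc, hIi, interior_Icc]
      intro w hw
      have hxm : a ≤ x := (hIi ▸ hx).1
      have hym : y ≤ b := (hIi ▸ hy).2
      exact ⟨by linarith [hz.1, hw.1], by linarith [hz.2, hw.2]⟩
    have hdiff : DifferentiableOn ℝ S.T (interior (Icc (z-r) (z+r))) := fun w hw =>
      ((S.hderiv i w (interior_subset (hsubint hw))).hasDerivAt
        (mem_interior_iff_mem_nhds.mp (hsubint hw))).differentiableAt.differentiableWithinAt
    have hbound : ∀ w ∈ interior (Icc (z-r) (z+r)), 1 + e ≤ deriv S.T w := by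
      intro w hw
      have hww := hsubint hw
      rw [S.deriv_eq_T' i hww]
      refine hle i w ⟨interior_subset hww, mem_iInter.2 fun j => ?_⟩
      rw [interior_Icc] at hw
      have h1 := hzF j
      have h2 : |z - w| ≤ r := by
        rw [abs_le]; constructor <;> [linarith [hw.2]; linarith [hw.1]]
      have := abs_sub_abs_le_abs_sub (z - S.fixPt j) (z - w)
      have h3 : (z - S.fixPt j) - (z - w) = w - S.fixPt j := by ring
      rw [h3] at this
      simp only [mem_setOf_eq]
      linarith [abs_sub_comm z w ▸ h2]
    have := hconv.mul_sub_le_image_sub_of_le_deriv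
      ((S.T_contOn i).mono hsubI) hdiff hbound
      (z-r) (left_mem_Icc.mpr (by linarith)) (z+r) (right_mem_Icc.mpr (by linarith))
      (by linarith)
    linarith
  have ho1 : y - (z+r) ≤ S.T y - S.T (z+r) :=
    S.T_expand i (z+r) hz2 y hy (by linarith [hz.2])
  have ho2 : (z-r) - x ≤ S.T (z-r) - S.T x :=
    S.T_expand i x hx (z-r) hz1 (by linarith [hz.1])
  nlinarith

lemma cyl_subset_unit : ∀ w : List (Fin m), S.cyl w ⊆ Icc 0 1
  | [] => subset_rfl
  | i :: _ => inter_subset_left.trans (S.hIsub i)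

lemma cyl_isIcc : ∀ w : List (Fin m), ∃ a b : ℝ, a ≤ b ∧ S.cyl w = Icc a b := by
  intro w
  induction w with
  | nil => exact ⟨0, 1, by norm_num, rfl⟩
  | cons i w ih =>
    obtain ⟨a, b, hab, hw⟩ := ih
    obtain ⟨p, q, hpq, hIi⟩ := S.hI i
    have hsub01 : Icc a b ⊆ Icc (0:ℝ) 1 := hw ▸ S.cyl_subset_unit w
    have hs : S.cyl (i :: w) = S.I i ∩ S.T ⁻¹' Icc a b := by rw [← hw]; rfl
    have hIcpt : IsCompact (S.I i) := hIi ▸ isCompact_Icc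
    have hIcl : IsClosed (S.I i) := hIi ▸ isClosed_Icc
    have hclosed : IsClosed (S.cyl (i :: w)) := by
      rw [hs]
      exact (S.T_contOn i).preimage_isClosed_of_isClosed hIcl isClosed_Icc
    have hsubI : S.cyl (i :: w) ⊆ S.I i := by rw [hs]; exact inter_subset_left
    have hcpt : IsCompact (S.cyl (i :: w)) := hIcpt.of_isClosed_subset hclosed hsubI
    have hne : (S.cyl (i :: w)).Nonempty := by
      obtain ⟨x, hxI, hTx⟩ := S.hsurj i (hsub01 (left_mem_Icc.mpr hab))
      exact ⟨x, by rw [hs]; exact ⟨hxI, by rw [mem_preimage, hTx]; exact left_mem_Icc.mpr hab⟩⟩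
    have hoc : ∀ u ∈ S.cyl (i :: w), ∀ v ∈ S.cyl (i :: w), Icc u v ⊆ S.cyl (i :: w) := by
      intro u hu v hv t ht
      rw [hs] at hu hv ⊢
      have htI : t ∈ S.I i := by
        rw [hIi] at hu hv ⊢
        exact ⟨hu.1.1.trans ht.1, ht.2.trans hv.1.2⟩
      refine ⟨htI, ?_, ?_⟩
      · exact hu.2.1.trans (S.T_monoOn i hu.1 htI ht.1)
      · exact (S.T_monoOn i htI hv.1 ht.2).trans hv.2.2
    refine ⟨sInf (S.cyl (i :: w)), sSup (S.cyl (i :: w)),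
      csInf_le_csSup hne hcpt.bddBelow hcpt.bddAbove, ?_⟩
    refine Subset.antisymm (fun z hz => ⟨csInf_le hcpt.bddBelow hz, le_csSup hcpt.bddAbove hz⟩) ?_
    exact hoc _ (hcpt.sInf_mem hne) _ (hcpt.sSup_mem hne)

lemma cyl_nonempty (w : List (Fin m)) : (S.cyl w).Nonempty := by
  obtain ⟨a, b, hab, hw⟩ := S.cyl_isIcc w
  exact ⟨a, hw ▸ left_mem_Icc.mpr hab⟩

lemma cyl_isCompact (w : List (Fin m)) : IsCompact (S.cyl w) := by
  obtain ⟨a, b, hab, hw⟩ := S.cyl_isIcc w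
  exact hw ▸ isCompact_Icc

lemma cyl_isClosed (w : List (Fin m)) : IsClosed (S.cyl w) := by
  obtain ⟨a, b, hab, hw⟩ := S.cyl_isIcc w
  exact hw ▸ isClosed_Icc

/-- the key quantitative shrinking estimate -/
lemma cyl_width {ε : ℝ} (hε : 0 < ε) {δ : ℝ} (hδ : 0 < δ)
    (hgain : ∀ i, ∀ x ∈ S.I i, ∀ y ∈ S.I i, x ≤ y → ε ≤ y - x →
      y - x + δ ≤ S.T y - S.T x) :
    ∀ w : List (Fin m), ∀ a b : ℝ, a ≤ b → S.cyl w = Icc a b →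
      b - a < ε ∨ b - a + w.length * δ ≤ 1 := by
  intro w
  induction w with
  | nil =>
    intro a b hab hw
    have heq : Icc (0:ℝ) 1 = Icc a b := hw
    have h0 : (0:ℝ) ∈ Icc a b := by rw [← heq]; exact left_mem_Icc.mpr zero_le_one
    have ha : a ∈ Icc (0:ℝ) 1 := by rw [heq]; exact left_mem_Icc.mpr hab
    have hb : b ∈ Icc (0:ℝ) 1 := by rw [heq]; exact right_mem_Icc.mpr hab
    right
    simp only [List.length_nil, Nat.cast_zero, zero_mul, add_zero]
    linarith [h0.1, ha.1, hb.2]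
  | cons i w ih =>
    intro a b hab hw
    by_cases hlt : b - a < ε
    · exact Or.inl hlt
    push_neg at hlt
    obtain ⟨a', b', hab', hw'⟩ := S.cyl_isIcc w
    have hamem : a ∈ S.cyl (i :: w) := hw ▸ left_mem_Icc.mpr hab
    have hbmem : b ∈ S.cyl (i :: w) := hw ▸ right_mem_Icc.mpr hab
    have haI : a ∈ S.I i := hamem.1
    have hbI : b ∈ S.I i := hbmem.1
    have hTa : S.T a ∈ Icc a' b' := hw' ▸ hamem.2
    have hTb : S.T b ∈ Icc a' b' := hw' ▸ hbmem.2
    have hgap := hgain i a haI b hbI hab hlt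
    have hwid : b - a + δ ≤ b' - a' := by
      have := hTa.1
      have := hTb.2
      linarith
    rcases ih a' b' hab' hw' with h | h
    · exfalso; linarith
    · right
      simp only [List.length_cons]
      push_cast
      linarith

lemma word_zero (ω : SymbSp m) : word ω 0 = [] := rfl

lemma word_succ (ω : SymbSp m) (n : ℕ) :
    word ω (n + 1) = ω 0 :: word (shift ω) n := by
  simp only [word, List.ofFn_succ]
  rfl

lemma word_length (ω : SymbSp m) (n : ℕ) : (word ω n).length = n := by
  simp [word]

lemma cyl_word_anti (n : ℕ) : ∀ ω : SymbSp m,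
    S.cyl (word ω (n+1)) ⊆ S.cyl (word ω n) := by
  induction n with
  | zero =>
    intro ω
    rw [word_zero]
    exact S.cyl_subset_unit _
  | succ n ih =>
    intro ω
    rw [word_succ ω (n+1), word_succ ω n]
    show S.I (ω 0) ∩ S.T ⁻¹' (S.cyl (word (shift ω) (n+1)))
      ⊆ S.I (ω 0) ∩ S.T ⁻¹' (S.cyl (word (shift ω) n))
    exact inter_subset_inter subset_rfl (preimage_mono (ih (shift ω)))

lemma cyl_word_anti' (ω : SymbSp m) : Antitone (fun n => S.cyl (word ω n)) :=
  antitone_nat_of_succ_le (fun n => S.cyl_word_anti n ω)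

lemma code_mem_cyl (ω : SymbSp m) (n : ℕ) : S.code ω ∈ S.cyl (word ω n) := by
  have hne : (⋂ k, S.cyl (word ω k)).Nonempty := by
    refine IsCompact.nonempty_iInter_of_sequence_nonempty_isCompact_isClosed _
      (fun k => S.cyl_word_anti k ω) (fun k => S.cyl_nonempty _)
      (S.cyl_isCompact _) (fun k => S.cyl_isClosed _)
  have hcpt : IsCompact (⋂ k, S.cyl (word ω k)) :=
    (S.cyl_isCompact (word ω 0)).of_isClosed_subset
      (isClosed_iInter fun k => S.cyl_isClosed _) (iInter_subset _ 0)
  have hmem : S.code ω ∈ ⋂ k, S.cyl (word ω k) := hcpt.sSup_mem hne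
  exact mem_iInter.mp hmem n

lemma code_mem_I (ω : SymbSp m) : S.code ω ∈ S.I (ω 0) := by
  have := S.code_mem_cyl ω 1
  have h1 : word ω 1 = [ω 0] := by simp [word, List.ofFn_succ]
  rw [h1] at this
  exact this.1

lemma cyl_shrink (ω : SymbSp m) {ε : ℝ} (hε : 0 < ε) :
    ∃ n a b, a ≤ b ∧ S.cyl (word ω n) = Icc a b ∧ b - a ≤ ε := by
  obtain ⟨δ, hδ, hgain⟩ := S.expand_gain ε hε
  obtain ⟨n, hn⟩ := exists_nat_gt (1 / δ)
  obtain ⟨a, b, hab, hw⟩ := S.cyl_isIcc (word ω n)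
  refine ⟨n, a, b, hab, hw, ?_⟩
  rcases S.cyl_width hε hδ hgain (word ω n) a b hab hw with h | h
  · linarith
  · rw [word_length] at h
    by_contra hcon
    push_neg at hcon
    have hδn : 1 / δ < n := hn
    have : 1 < n * δ := by
      rw [div_lt_iff₀ hδ] at hδn
      linarith
    linarith


lemma isOpen_wordset (ω : SymbSp m) (n : ℕ) :
    IsOpen {ω' : SymbSp m | ∀ j : Fin n, ω' j = ω j} := by
  have : {ω' : SymbSp m | ∀ j : Fin n, ω' j = ω j}
      = ⋂ j : Fin n, (fun ω' : SymbSp m => ω' j) ⁻¹' {ω j} := by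
    ext ω'; simp [mem_iInter]
  rw [this]
  exact isOpen_iInter_of_finite fun j =>
    (continuous_apply (j : ℕ)).isOpen_preimage _ (isOpen_discrete _)

lemma word_eq_of_agree {ω ω' : SymbSp m} {n : ℕ} (h : ∀ j : Fin n, ω' j = ω j) :
    word ω' n = word ω n := by
  simp only [word]
  congr 1
  exact funext h

lemma code_continuous : Continuous S.code := by
  rw [continuous_iff_continuousAt]
  intro ω
  rw [ContinuousAt, Metric.tendsto_nhds]
  intro ε hε
  obtain ⟨n, a, b, hab, hw, hwid⟩ := S.cyl_shrink ω (half_pos hε)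
  have hV : {ω' : SymbSp m | ∀ j : Fin n, ω' j = ω j} ∈ 𝓝 ω :=
    (isOpen_wordset ω n).mem_nhds (fun j => rfl)
  filter_upwards [hV] with ω' hω'
  have h1 : S.code ω' ∈ Icc a b := by
    rw [← hw, ← word_eq_of_agree hω']
    exact S.code_mem_cyl ω' n
  have h2 : S.code ω ∈ Icc a b := by
    rw [← hw]; exact S.code_mem_cyl ω n
  rw [Real.dist_eq, abs_sub_lt_iff]
  constructor <;> [linarith [h1.1, h1.2, h2.1, h2.2]; linarith [h1.1, h1.2, h2.1, h2.2]]

lemma T'_code_pos (ω : SymbSp m) : 0 < S.T' (S.code ω) :=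
  lt_of_lt_of_le one_pos (S.T'_ge_one (ω 0) _ (S.code_mem_I ω))

lemma g_continuous : Continuous S.g := by
  rw [continuous_iff_continuousAt]
  intro ω
  have hmemI : S.code ω ∈ S.I (ω 0) := S.code_mem_I ω
  have h1 : Tendsto S.code (𝓝 ω) (𝓝[S.I (ω 0)] (S.code ω)) := by
    rw [tendsto_nhdsWithin_iff]
    refine ⟨S.code_continuous.continuousAt, ?_⟩
    have hV : {ω' : SymbSp m | ∀ j : Fin 1, ω' j = ω j} ∈ 𝓝 ω :=
      (isOpen_wordset ω 1).mem_nhds (fun j => rfl)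
    filter_upwards [hV] with ω' hω'
    have h0 : ω' 0 = ω 0 := hω' ⟨0, one_pos⟩
    have := S.code_mem_I ω'
    rwa [h0] at this
  have h2 : Tendsto S.T' (𝓝[S.I (ω 0)] (S.code ω)) (𝓝 (S.T' (S.code ω))) :=
    S.hT'cont (ω 0) _ hmemI
  have h3 : ContinuousAt Real.log (S.T' (S.code ω)) :=
    Real.continuousAt_log (ne_of_gt (S.T'_code_pos ω))
  exact h3.tendsto.comp (h2.comp h1)


end PCSystem

/-! ### Part B: construction of the invariant measure -/

section Empirical

variable {m : ℕ}

/-- empirical average of the indicator of `A` along the orbit of `ω₀` -/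
noncomputable def emp (ω₀ : SymbSp m) (n : ℕ) (A : Set (SymbSp m)) : ℝ :=
  (n : ℝ)⁻¹ * ∑ j ∈ Finset.range n, A.indicator (fun _ => (1:ℝ)) (shift^[j] ω₀)

lemma emp_nonneg (ω₀ : SymbSp m) (n : ℕ) (A : Set (SymbSp m)) : 0 ≤ emp ω₀ n A := by
  refine mul_nonneg (by positivity) (Finset.sum_nonneg fun j _ => ?_)
  exact Set.indicator_nonneg (fun _ _ => zero_le_one) _

lemma emp_le_one (ω₀ : SymbSp m) (n : ℕ) (A : Set (SymbSp m)) : emp ω₀ n A ≤ 1 := by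
  rcases Nat.eq_zero_or_pos n with rfl | hn
  · simp [emp]
  · have hsum : ∑ j ∈ Finset.range n, A.indicator (fun _ => (1:ℝ)) (shift^[j] ω₀) ≤ n := by
      calc ∑ j ∈ Finset.range n, A.indicator (fun _ => (1:ℝ)) (shift^[j] ω₀)
          ≤ ∑ _j ∈ Finset.range n, (1:ℝ) := by
            refine Finset.sum_le_sum fun j _ => ?_
            by_cases h : shift^[j] ω₀ ∈ A <;> simp [Set.indicator_apply, h]
        _ = n := by simp
    rw [emp]
    have hn' : (0:ℝ) < n := by exact_mod_cast hn
    calc (n : ℝ)⁻¹ * ∑ j ∈ Finset.range n, A.indicator (fun _ => (1:ℝ)) (shift^[j] ω₀)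
        ≤ (n : ℝ)⁻¹ * n := by
          exact mul_le_mul_of_nonneg_left hsum (by positivity)
      _ = 1 := by field_simp

lemma emp_union {ω₀ : SymbSp m} {A B : Set (SymbSp m)} (h : Disjoint A B) (n : ℕ) :
    emp ω₀ n (A ∪ B) = emp ω₀ n A + emp ω₀ n B := by
  simp only [emp]
  rw [← mul_add, ← Finset.sum_add_distrib]
  congr 1
  refine Finset.sum_congr rfl fun j _ => ?_
  rw [Set.indicator_union_of_disjoint h]

lemma emp_union_le (ω₀ : SymbSp m) (A B : Set (SymbSp m)) (n : ℕ) :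
    emp ω₀ n (A ∪ B) ≤ emp ω₀ n A + emp ω₀ n B := by
  simp only [emp]
  rw [← mul_add, ← Finset.sum_add_distrib]
  refine mul_le_mul_of_nonneg_left (Finset.sum_le_sum fun j _ => ?_) (by positivity)
  set x := shift^[j] ω₀
  by_cases hA : x ∈ A
  · by_cases hB : x ∈ B <;>
      simp [Set.indicator_apply, hA, hB]
  · by_cases hB : x ∈ B <;>
      simp [Set.indicator_apply, hA, hB]

lemma emp_mono (ω₀ : SymbSp m) {A B : Set (SymbSp m)} (h : A ⊆ B) (n : ℕ) :
    emp ω₀ n A ≤ emp ω₀ n B := by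
  refine mul_le_mul_of_nonneg_left (Finset.sum_le_sum fun j _ => ?_) (by positivity)
  exact Set.indicator_le_indicator_of_subset h (fun _ => zero_le_one) _

lemma emp_univ (ω₀ : SymbSp m) {n : ℕ} (hn : 0 < n) : emp ω₀ n univ = 1 := by
  simp only [emp, Set.indicator_univ]
  have hn' : (0:ℝ) < n := by exact_mod_cast hn
  simp only [Finset.sum_const, Finset.card_range, nsmul_eq_mul, mul_one]
  field_simp

lemma emp_shift (ω₀ : SymbSp m) (A : Set (SymbSp m)) {n : ℕ} (hn : 0 < n) :
    |emp ω₀ n (shift ⁻¹' A) - emp ω₀ n A| ≤ 2 / n := by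
  have key : ∀ j, (shift ⁻¹' A).indicator (fun _ => (1:ℝ)) (shift^[j] ω₀)
      = A.indicator (fun _ => (1:ℝ)) (shift^[j+1] ω₀) := by
    intro j
    have : shift^[j+1] ω₀ = shift (shift^[j] ω₀) := Function.iterate_succ_apply' shift j ω₀
    rw [this]
    by_cases h : shift (shift^[j] ω₀) ∈ A <;> simp [Set.indicator_apply, h, Set.mem_preimage]
  set a : ℕ → ℝ := fun j => A.indicator (fun _ => (1:ℝ)) (shift^[j] ω₀) with ha
  have ha01 : ∀ j, 0 ≤ a j ∧ a j ≤ 1 := by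
    intro j
    constructor
    · exact Set.indicator_nonneg (fun _ _ => zero_le_one) _
    · by_cases h : shift^[j] ω₀ ∈ A <;> simp [ha, Set.indicator_apply, h]
  have hsum : ∑ j ∈ Finset.range n, (shift ⁻¹' A).indicator (fun _ => (1:ℝ)) (shift^[j] ω₀)
      = ∑ j ∈ Finset.range n, a (j+1) := Finset.sum_congr rfl fun j _ => key j
  have hshift : ∑ j ∈ Finset.range n, a (j+1) = (∑ j ∈ Finset.range n, a j) + a n - a 0 := by
    have h1 : ∑ j ∈ Finset.range (n+1), a j = (∑ j ∈ Finset.range n, a j) + a n :=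
      Finset.sum_range_succ a n
    have h2 : ∑ j ∈ Finset.range (n+1), a j = a 0 + ∑ j ∈ Finset.range n, a (j+1) := by
      rw [Finset.sum_range_succ' a n]; ring
    linarith
  have hn' : (0:ℝ) < n := by exact_mod_cast hn
  rw [emp, emp, hsum, hshift]
  have : (n:ℝ)⁻¹ * ((∑ j ∈ Finset.range n, a j) + a n - a 0)
      - (n:ℝ)⁻¹ * ∑ j ∈ Finset.range n, a j = (a n - a 0) / n := by
    field_simp; ring
  rw [this]
  rw [abs_div, abs_of_pos hn', div_le_div_iff_of_pos_right hn']
  have h0 := ha01 0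
  have h1 := ha01 n
  rw [abs_le]
  constructor <;> [linarith; linarith]

end Empirical

section LimitMeasure

variable {m : ℕ}

/-- ultrafilter limit of empirical averages -/
noncomputable def Lam (U : Ultrafilter ℕ) (ω₀ : SymbSp m) (A : Set (SymbSp m)) : ℝ :=
  Filter.liminf (fun n => emp ω₀ n A) ↑U

lemma tendsto_emp_Lam (U : Ultrafilter ℕ) (ω₀ : SymbSp m) (A : Set (SymbSp m)) :
    Tendsto (fun n => emp ω₀ n A) ↑U (𝓝 (Lam U ω₀ A)) := by
  have hmem : ↑(U.map (fun n => emp ω₀ n A)) ≤ 𝓟 (Icc (0:ℝ) 1) := by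
    rw [Ultrafilter.coe_map, le_principal_iff, mem_map]
    filter_upwards [univ_mem] with n _
    exact ⟨emp_nonneg ω₀ n A, emp_le_one ω₀ n A⟩
  obtain ⟨c, -, hc⟩ := isCompact_Icc.ultrafilter_le_nhds _ hmem
  have htc : Tendsto (fun n => emp ω₀ n A) ↑U (𝓝 c) := by
    rw [Tendsto, ← Ultrafilter.coe_map]; exact hc
  have : Lam U ω₀ A = c := htc.liminf_eq
  rwa [this]

lemma Lam_nonneg (U : Ultrafilter ℕ) (ω₀ : SymbSp m) (A : Set (SymbSp m)) :
    0 ≤ Lam U ω₀ A :=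
  ge_of_tendsto (tendsto_emp_Lam U ω₀ A) (Eventually.of_forall fun n => emp_nonneg ω₀ n A)

lemma Lam_mono (U : Ultrafilter ℕ) (ω₀ : SymbSp m) {A B : Set (SymbSp m)} (h : A ⊆ B) :
    Lam U ω₀ A ≤ Lam U ω₀ B :=
  le_of_tendsto_of_tendsto' (tendsto_emp_Lam U ω₀ A) (tendsto_emp_Lam U ω₀ B)
    (fun n => emp_mono ω₀ h n)

lemma Lam_union (U : Ultrafilter ℕ) (ω₀ : SymbSp m) {A B : Set (SymbSp m)}
    (h : Disjoint A B) : Lam U ω₀ (A ∪ B) = Lam U ω₀ A + Lam U ω₀ B := by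
  refine tendsto_nhds_unique (tendsto_emp_Lam U ω₀ (A ∪ B)) ?_
  have := (tendsto_emp_Lam U ω₀ A).add (tendsto_emp_Lam U ω₀ B)
  refine Tendsto.congr (fun n => (emp_union h n).symm) this

lemma Lam_union_le (U : Ultrafilter ℕ) (ω₀ : SymbSp m) (A B : Set (SymbSp m)) :
    Lam U ω₀ (A ∪ B) ≤ Lam U ω₀ A + Lam U ω₀ B :=
  le_of_tendsto_of_tendsto' (tendsto_emp_Lam U ω₀ (A ∪ B))
    ((tendsto_emp_Lam U ω₀ A).add (tendsto_emp_Lam U ω₀ B))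
    (fun n => emp_union_le ω₀ A B n)

lemma Lam_univ (U : Ultrafilter ℕ) (hU : ↑U ≤ (atTop : Filter ℕ)) (ω₀ : SymbSp m) :
    Lam U ω₀ univ = 1 := by
  refine tendsto_nhds_unique (tendsto_emp_Lam U ω₀ univ) ?_
  have hev : ∀ᶠ n in ↑U, emp ω₀ n univ = 1 := by
    have : ∀ᶠ n in (atTop : Filter ℕ), emp ω₀ n univ = 1 := by
      filter_upwards [eventually_ge_atTop 1] with n hn
      exact emp_univ ω₀ hn
    exact hU this
  exact Tendsto.congr' (by filter_upwards [hev] with n h; exact h.symm) tendsto_const_nhds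

lemma Lam_shift (U : Ultrafilter ℕ) (hU : ↑U ≤ (atTop : Filter ℕ)) (ω₀ : SymbSp m)
    (A : Set (SymbSp m)) : Lam U ω₀ (shift ⁻¹' A) = Lam U ω₀ A := by
  have hd : Tendsto (fun n => emp ω₀ n (shift ⁻¹' A) - emp ω₀ n A) ↑U (𝓝 0) := by
    have h2 : Tendsto (fun n : ℕ => 2 / (n:ℝ)) atTop (𝓝 0) :=
      tendsto_const_div_atTop_nhds_zero_nat 2
    refine squeeze_zero_norm' ?_ (h2.mono_left hU)
    have : ∀ᶠ n in (atTop : Filter ℕ),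
        ‖emp ω₀ n (shift ⁻¹' A) - emp ω₀ n A‖ ≤ 2 / n := by
      filter_upwards [eventually_gt_atTop 0] with n hn
      exact emp_shift ω₀ A hn
    exact hU this
  have := (tendsto_emp_Lam U ω₀ (shift ⁻¹' A)).sub hd
  have h2 : Tendsto (fun n => emp ω₀ n A) ↑U (𝓝 (Lam U ω₀ (shift ⁻¹' A) - 0)) := by
    refine Tendsto.congr (fun n => by ring) this
  have := tendsto_nhds_unique (tendsto_emp_Lam U ω₀ A) h2
  rw [this, sub_zero]

/-- the content given by ultrafilter limits of empirical measures -/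
noncomputable def empContent (U : Ultrafilter ℕ) (ω₀ : SymbSp m) :
    MeasureTheory.Content (SymbSp m) where
  toFun K := ⟨Lam U ω₀ K, Lam_nonneg U ω₀ K⟩
  mono' K₁ K₂ h := by
    apply NNReal.coe_le_coe.mp
    exact Lam_mono U ω₀ h
  sup_disjoint' K₁ K₂ h _ _ := by
    apply NNReal.coe_injective
    push_cast
    exact Lam_union U ω₀ h
  sup_le' K₁ K₂ := by
    apply NNReal.coe_le_coe.mp
    exact Lam_union_le U ω₀ K₁ K₂

/-- the Borel measure on the shift space obtained from the empirical content -/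
noncomputable def empMeasure (U : Ultrafilter ℕ) (ω₀ : SymbSp m) :
    Measure (SymbSp m) := (empContent U ω₀).measure

lemma empMeasure_clopen (U : Ultrafilter ℕ) (ω₀ : SymbSp m) {A : Set (SymbSp m)}
    (hA : IsOpen A) (hA' : IsClosed A) :
    empMeasure U ω₀ A = ENNReal.ofReal (Lam U ω₀ A) := by
  have hcpt : IsCompact A := hA'.isCompact
  rw [empMeasure, MeasureTheory.Content.measure_apply _ hA.measurableSet,
    MeasureTheory.Content.outerMeasure_of_isOpen _ A hA,
    MeasureTheory.Content.innerContent_of_isCompact _ hcpt hA]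
  have hval : (empContent U ω₀).toFun ⟨A, hcpt⟩ = Real.toNNReal (Lam U ω₀ A) := by
    apply NNReal.coe_injective
    show Lam U ω₀ A = ((Lam U ω₀ A).toNNReal : ℝ)
    rw [Real.coe_toNNReal _ (Lam_nonneg U ω₀ A)]
  show ((empContent U ω₀).toFun ⟨A, hcpt⟩ : ENNReal) = ENNReal.ofReal (Lam U ω₀ A)
  rw [hval, ENNReal.ofReal]

lemma empMeasure_univ (U : Ultrafilter ℕ) (hU : ↑U ≤ (atTop : Filter ℕ)) (ω₀ : SymbSp m) :
    empMeasure U ω₀ univ = 1 := by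
  rw [empMeasure_clopen U ω₀ isOpen_univ isClosed_univ, Lam_univ U hU ω₀]
  simp

end LimitMeasure

section Cylinders

variable {m : ℕ}

/-- cylinder sets in the shift space -/
def Cyl (k : ℕ) (w : Fin k → Fin m) : Set (SymbSp m) := {x | ∀ j : Fin k, x (j : ℕ) = w j}

lemma isClosed_Cyl (k : ℕ) (w : Fin k → Fin m) : IsClosed (Cyl k w) := by
  have : Cyl k w = ⋂ j : Fin k, (fun x : SymbSp m => x (j:ℕ)) ⁻¹' {w j} := by
    ext x; simp [Cyl, mem_iInter]
  rw [this]
  exact isClosed_iInter fun j => IsClosed.preimage (continuous_apply ((j:ℕ))) (isClosed_discrete _)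

lemma isOpen_Cyl (k : ℕ) (w : Fin k → Fin m) : IsOpen (Cyl k w) := by
  have : Cyl k w = ⋂ j : Fin k, (fun x : SymbSp m => x (j:ℕ)) ⁻¹' {w j} := by
    ext x; simp [Cyl, mem_iInter]
  rw [this]
  exact isOpen_iInter_of_finite fun j =>
    (continuous_apply ((j:ℕ))).isOpen_preimage _ (isOpen_discrete _)

lemma mem_Cyl_self (x : SymbSp m) (k : ℕ) : x ∈ Cyl k (fun j : Fin k => x (j:ℕ)) :=
  fun _ => rfl

lemma Cyl_inter_of_le {k l : ℕ} (hkl : k ≤ l) (w : Fin k → Fin m) (v : Fin l → Fin m)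
    (hne : (Cyl k w ∩ Cyl l v).Nonempty) : Cyl k w ∩ Cyl l v = Cyl l v := by
  obtain ⟨x, hxw, hxv⟩ := hne
  refine inter_eq_right.mpr fun y hy j => ?_
  have hj : (j : ℕ) < l := lt_of_lt_of_le j.2 hkl
  calc y (j:ℕ) = v ⟨(j:ℕ), hj⟩ := hy ⟨(j:ℕ), hj⟩
    _ = x (j:ℕ) := (hxv ⟨(j:ℕ), hj⟩).symm
    _ = w j := hxw j

/-- the collection of cylinder sets -/
def cylSet (m : ℕ) : Set (Set (SymbSp m)) :=
  {A | ∃ (k : ℕ) (w : Fin k → Fin m), A = Cyl k w}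

lemma countable_cylSet : (cylSet m).Countable := by
  have : cylSet m = range (fun p : (Σ k : ℕ, (Fin k → Fin m)) => Cyl p.1 p.2) := by
    ext A
    constructor
    · rintro ⟨k, w, rfl⟩; exact ⟨⟨k, w⟩, rfl⟩
    · rintro ⟨⟨k, w⟩, rfl⟩; exact ⟨k, w, rfl⟩
  rw [this]
  exact countable_range _

lemma isPiSystem_cylSet : IsPiSystem (cylSet m) := by
  rintro A ⟨k, w, rfl⟩ B ⟨l, v, rfl⟩ hne
  rcases le_total k l with h | h
  · rw [Cyl_inter_of_le h w v hne]
    exact ⟨l, v, rfl⟩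
  · rw [inter_comm] at hne ⊢
    rw [Cyl_inter_of_le h v w hne]
    exact ⟨k, w, rfl⟩

lemma exists_Cyl_subset {U : Set (SymbSp m)} (hU : IsOpen U) {x : SymbSp m} (hx : x ∈ U) :
    ∃ k, Cyl k (fun j : Fin k => x (j:ℕ)) ⊆ U := by
  obtain ⟨I, u, hu, hsub⟩ := isOpen_pi_iff.mp hU x hx
  refine ⟨I.sup id + 1, fun y hy => hsub fun a ha => ?_⟩
  have hlt : a < I.sup id + 1 := Nat.lt_succ_of_le (Finset.le_sup (f := id) ha)
  have := hy ⟨a, hlt⟩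
  simp only at this
  rw [this]
  exact (hu a ha).2

lemma measurableSpace_eq_generateFrom_cylSet :
    (inferInstance : MeasurableSpace (SymbSp m)) =
      MeasurableSpace.generateFrom (cylSet m) := by
  refine le_antisymm ?_ ?_
  · have hb : (inferInstance : MeasurableSpace (SymbSp m)) = borel (SymbSp m) :=
      BorelSpace.measurable_eq
    rw [hb, borel]
    refine MeasurableSpace.generateFrom_le fun U hU => ?_
    have hUrep : U = ⋃₀ {A | A ∈ cylSet m ∧ A ⊆ U} := by
      ext x
      constructor
      · intro hx
        obtain ⟨k, hk⟩ := exists_Cyl_subset hU hx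
        exact ⟨Cyl k _, ⟨⟨k, _, rfl⟩, hk⟩, mem_Cyl_self x k⟩
      · rintro ⟨A, ⟨-, hAU⟩, hxA⟩
        exact hAU hxA
    rw [hUrep]
    refine MeasurableSet.sUnion (countable_cylSet.mono fun A hA => hA.1) fun A hA => ?_
    exact MeasurableSpace.measurableSet_generateFrom hA.1
  · refine MeasurableSpace.generateFrom_le fun A hA => ?_
    obtain ⟨k, w, rfl⟩ := hA
    exact (isClosed_Cyl k w).measurableSet

lemma shift_continuous : Continuous (shift : SymbSp m → SymbSp m) :=
  continuous_pi fun n => continuous_apply (n + 1)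

lemma empMeasure_isProb (U : Ultrafilter ℕ) (hU : ↑U ≤ (atTop : Filter ℕ)) (ω₀ : SymbSp m) :
    IsProbabilityMeasure (empMeasure U ω₀) := ⟨empMeasure_univ U hU ω₀⟩

lemma empMeasure_shiftInv (U : Ultrafilter ℕ) (hU : ↑U ≤ (atTop : Filter ℕ))
    (ω₀ : SymbSp m) : (empMeasure U ω₀).map shift = empMeasure U ω₀ := by
  haveI := empMeasure_isProb U hU ω₀
  refine MeasureTheory.ext_of_generate_finite (cylSet m)
    measurableSpace_eq_generateFrom_cylSet isPiSystem_cylSet ?_ ?_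
  · rintro A ⟨k, w, rfl⟩
    rw [Measure.map_apply shift_continuous.measurable (isClosed_Cyl k w).measurableSet]
    rw [empMeasure_clopen U ω₀ (shift_continuous.isOpen_preimage _ (isOpen_Cyl k w))
      (IsClosed.preimage shift_continuous (isClosed_Cyl k w)),
      empMeasure_clopen U ω₀ (isOpen_Cyl k w) (isClosed_Cyl k w),
      Lam_shift U hU ω₀]
  · rw [Measure.map_apply shift_continuous.measurable MeasurableSet.univ]
    simp

end Cylinders

section IntegralLemma

variable {m : ℕ}

/-- canonical extension of a word to a point in the cylinder -/
def extWord (hm : 0 < m) (k : ℕ) (w : Fin k → Fin m) : SymbSp m :=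
  fun n => if h : n < k then w ⟨n, h⟩ else ⟨0, hm⟩

lemma extWord_mem (hm : 0 < m) (k : ℕ) (w : Fin k → Fin m) :
    extWord hm k w ∈ Cyl k w := fun j => by simp [extWord, j.2]

lemma exists_osc_bound {E : Type*} [NormedAddCommGroup E] (h : SymbSp m → E)
    (hh : Continuous h) {ε : ℝ} (hε : 0 < ε) :
    ∃ k, ∀ (w : Fin k → Fin m), ∀ x ∈ Cyl k w, ∀ y ∈ Cyl k w, ‖h x - h y‖ ≤ ε := by
  have hcov : ∀ x : SymbSp m, ∃ k, ∀ y ∈ Cyl k (fun j : Fin k => x (j:ℕ)),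
      ‖h y - h x‖ < ε/2 := by
    intro x
    have hopen : IsOpen {y : SymbSp m | ‖h y - h x‖ < ε/2} := by
      have : Continuous fun y => ‖h y - h x‖ := (hh.sub continuous_const).norm
      exact isOpen_lt this continuous_const
    obtain ⟨k, hk⟩ := exists_Cyl_subset hopen (by simp [half_pos hε] : x ∈ _)
    exact ⟨k, fun y hy => hk hy⟩
  choose kx hkx using hcov
  obtain ⟨t, ht⟩ := isCompact_univ.elim_finite_subcover
    (fun x : SymbSp m => Cyl (kx x) (fun j => x (j:ℕ)))
    (fun x => isOpen_Cyl _ _)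
    (fun z _ => mem_iUnion.2 ⟨z, mem_Cyl_self z _⟩)
  refine ⟨t.sup kx, fun w x hx y hy => ?_⟩
  obtain ⟨z, hz, hxz⟩ := mem_iUnion₂.mp (ht (mem_univ x))
  have hyz : y ∈ Cyl (kx z) (fun j => z (j:ℕ)) := by
    intro j
    have hjk : (j:ℕ) < t.sup kx := lt_of_lt_of_le j.2 (Finset.le_sup hz)
    calc y (j:ℕ) = w ⟨(j:ℕ), hjk⟩ := hy ⟨(j:ℕ), hjk⟩
      _ = x (j:ℕ) := (hx ⟨(j:ℕ), hjk⟩).symm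
      _ = z (j:ℕ) := hxz j
  have h1 := hkx z x hxz
  have h2 := hkx z y hyz
  calc ‖h x - h y‖ ≤ ‖h x - h z‖ + ‖h z - h y‖ := norm_sub_le_norm_sub_add_norm_sub _ _ _
    _ ≤ ε := by rw [← norm_neg (h z - h y), neg_sub]; linarith

lemma indicator_sum_eq {E : Type*} [AddCommGroup E] [Module ℝ E] (k : ℕ)
    (c : (Fin k → Fin m) → E) (x : SymbSp m) :
    ∑ w : Fin k → Fin m, (Cyl k w).indicator (fun _ => (1:ℝ)) x • c w
      = c (fun j : Fin k => x (j:ℕ)) := by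
  rw [Finset.sum_eq_single (fun j : Fin k => x (j:ℕ))]
  · rw [Set.indicator_of_mem (mem_Cyl_self x k), one_smul]
  · intro w _ hw
    have hx : x ∉ Cyl k w := by
      intro hmem
      exact hw (funext fun j => (hmem j).symm)
    rw [Set.indicator_of_notMem hx, zero_smul]
  · intro habs
    exact absurd (Finset.mem_univ _) habs

lemma sum_emp_smul_eq {E : Type*} [AddCommGroup E] [Module ℝ E] (ω₀ : SymbSp m)
    (n k : ℕ) (c : (Fin k → Fin m) → E) :
    ∑ w : Fin k → Fin m, emp ω₀ n (Cyl k w) • c w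
      = (n:ℝ)⁻¹ • ∑ j ∈ Finset.range n, c (fun i : Fin k => shift^[j] ω₀ (i:ℕ)) := by
  have step1 : ∀ w : Fin k → Fin m, emp ω₀ n (Cyl k w) • c w
      = (n:ℝ)⁻¹ • ∑ j ∈ Finset.range n,
          (Cyl k w).indicator (fun _ => (1:ℝ)) (shift^[j] ω₀) • c w := by
    intro w
    rw [emp, mul_smul]
    congr 1
    rw [Finset.sum_smul]
  rw [Finset.sum_congr rfl fun w _ => step1 w, ← Finset.smul_sum]
  congr 1
  rw [Finset.sum_comm]
  exact Finset.sum_congr rfl fun j _ => indicator_sum_eq k c _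

lemma Cyl_pairwise_disjoint (k : ℕ) :
    ((Finset.univ : Finset (Fin k → Fin m)) : Set (Fin k → Fin m)).Pairwise
      (Function.onFun Disjoint fun w => Cyl (m := m) k w) := by
  intro w _ v _ hwv
  refine Set.disjoint_left.mpr fun x hxw hxv => ?_
  exact hwv (funext fun j => (hxw j).symm.trans (hxv j))

lemma Cyl_cover_univ (k : ℕ) :
    (⋃ w ∈ (Finset.univ : Finset (Fin k → Fin m)), Cyl k w) = univ := by
  refine eq_univ_of_forall fun x => ?_
  exact mem_biUnion (Finset.mem_univ _) (mem_Cyl_self x k)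

lemma tendsto_birkhoff_integral {E : Type*} [NormedAddCommGroup E] [NormedSpace ℝ E]
    [CompleteSpace E] (hm : 0 < m) (U : Ultrafilter ℕ) (hU : ↑U ≤ (atTop : Filter ℕ))
    (ω₀ : SymbSp m) (h : SymbSp m → E) (hh : Continuous h) :
    Tendsto (fun n => birkhoff shift h n ω₀) ↑U (𝓝 (∫ x, h x ∂(empMeasure U ω₀))) := by
  haveI := empMeasure_isProb U hU ω₀
  set μ := empMeasure U ω₀ with hμdef
  have hint : MeasureTheory.Integrable h μ :=
    hh.integrable_of_hasCompactSupport
      (HasCompactSupport.intro isCompact_univ (fun x hx => absurd (mem_univ x) hx))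
  rw [Metric.tendsto_nhds]
  intro ε hε
  have hε' : 0 < ε/4 := by linarith
  obtain ⟨k, hk⟩ := exists_osc_bound h hh hε'
  set c : (Fin k → Fin m) → E := fun w => h (extWord hm k w) with hcdef
  have hCmeas : ∀ w : Fin k → Fin m, MeasurableSet (Cyl (m := m) k w) :=
    fun w => (isClosed_Cyl k w).measurableSet
  have hCfin : ∀ w : Fin k → Fin m, μ (Cyl k w) ≠ ⊤ :=
    fun w => MeasureTheory.measure_ne_top μ _
  have hLam : ∀ w : Fin k → Fin m, (μ (Cyl k w)).toReal = Lam U ω₀ (Cyl k w) := by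
    intro w
    rw [hμdef, empMeasure_clopen U ω₀ (isOpen_Cyl k w) (isClosed_Cyl k w),
      ENNReal.toReal_ofReal (Lam_nonneg U ω₀ _)]
  have hsum1 : ∑ w : Fin k → Fin m, (μ (Cyl k w)).toReal = 1 := by
    have hb := MeasureTheory.measure_biUnion_finset (μ := μ) (Cyl_pairwise_disjoint k)
      (fun w _ => hCmeas w)
    rw [Cyl_cover_univ k] at hb
    have := ENNReal.toReal_sum (s := Finset.univ)
      (f := fun w : Fin k → Fin m => μ (Cyl k w)) (fun w _ => hCfin w)
    rw [← hb, MeasureTheory.measure_univ] at this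
    simpa using this.symm
  -- bound between the integral and the finite approximation
  have hIbound : ‖(∫ x, h x ∂μ) - ∑ w : Fin k → Fin m, (μ (Cyl k w)).toReal • c w‖
      ≤ ε/4 := by
    have hsplit : ∫ x, h x ∂μ = ∑ w : Fin k → Fin m, ∫ x in Cyl k w, h x ∂μ := by
      rw [← MeasureTheory.integral_biUnion_finset Finset.univ (fun w _ => hCmeas w)
        (Cyl_pairwise_disjoint k) (fun w _ => hint.integrableOn), Cyl_cover_univ k,
        Measure.restrict_univ]
    rw [hsplit, ← Finset.sum_sub_distrib]
    refine le_trans (norm_sum_le _ _) ?_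
    have hterm : ∀ w : Fin k → Fin m,
        ‖(∫ x in Cyl k w, h x ∂μ) - (μ (Cyl k w)).toReal • c w‖
          ≤ (ε/4) * (μ (Cyl k w)).toReal := by
      intro w
      have hconst : ∫ x in Cyl k w, c w ∂μ = (μ (Cyl k w)).toReal • c w :=
        MeasureTheory.setIntegral_const (c w)
      rw [← hconst, ← MeasureTheory.integral_sub hint.integrableOn
        (MeasureTheory.integrableOn_const (hCfin w))]
      refine MeasureTheory.norm_setIntegral_le_of_norm_le_const (hCfin w).lt_top ?_
      · intro x hx
        exact hk w x hx (extWord hm k w) (extWord_mem hm k w)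
    calc ∑ w : Fin k → Fin m, ‖(∫ x in Cyl k w, h x ∂μ) - (μ (Cyl k w)).toReal • c w‖
        ≤ ∑ w : Fin k → Fin m, (ε/4) * (μ (Cyl k w)).toReal :=
          Finset.sum_le_sum fun w _ => hterm w
      _ = ε/4 := by rw [← Finset.mul_sum, hsum1, mul_one]
  -- bound between the Birkhoff average and the finite approximation
  have hBbound : ∀ n : ℕ,
      ‖birkhoff shift h n ω₀ - ∑ w : Fin k → Fin m, emp ω₀ n (Cyl k w) • c w‖ ≤ ε/4 := by
    intro n
    rcases Nat.eq_zero_or_pos n with rfl | hn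
    · simp [birkhoff, emp]
      positivity
    have hn' : (0:ℝ) < n := by exact_mod_cast hn
    rw [sum_emp_smul_eq, birkhoff, ← smul_sub, ← Finset.sum_sub_distrib]
    rw [norm_smul]
    have hbig : ‖∑ j ∈ Finset.range n,
        (h (shift^[j] ω₀) - c (fun i : Fin k => shift^[j] ω₀ (i:ℕ)))‖
        ≤ n * (ε/4) := by
      refine le_trans (norm_sum_le _ _) ?_
      calc ∑ j ∈ Finset.range n,
            ‖h (shift^[j] ω₀) - c (fun i : Fin k => shift^[j] ω₀ (i:ℕ))‖
          ≤ ∑ _j ∈ Finset.range n, (ε/4) := by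
            refine Finset.sum_le_sum fun j _ => ?_
            exact hk (fun i : Fin k => shift^[j] ω₀ (i:ℕ)) _ (mem_Cyl_self _ k) _
              (extWord_mem hm k _)
        _ = n * (ε/4) := by rw [Finset.sum_const, Finset.card_range, nsmul_eq_mul]
    calc ‖(n:ℝ)⁻¹‖ * ‖∑ j ∈ Finset.range n,
          (h (shift^[j] ω₀) - c (fun i : Fin k => shift^[j] ω₀ (i:ℕ)))‖
        ≤ (n:ℝ)⁻¹ * (n * (ε/4)) := by
          rw [Real.norm_eq_abs, abs_of_pos (by positivity)]
          exact mul_le_mul_of_nonneg_left hbig (by positivity)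
      _ = ε/4 := by field_simp
  -- convergence of the finite approximation
  have hT : Tendsto (fun n => ∑ w : Fin k → Fin m, emp ω₀ n (Cyl k w) • c w) ↑U
      (𝓝 (∑ w : Fin k → Fin m, (μ (Cyl k w)).toReal • c w)) := by
    refine tendsto_finset_sum _ fun w _ => ?_
    rw [hLam w]
    exact (tendsto_emp_Lam U ω₀ (Cyl k w)).smul_const (c w)
  filter_upwards [Metric.tendsto_nhds.mp hT (ε/4) hε'] with n hn
  have d1 := hBbound n
  calc dist (birkhoff shift h n ω₀) (∫ x, h x ∂μ)
      ≤ dist (birkhoff shift h n ω₀) (∑ w : Fin k → Fin m, emp ω₀ n (Cyl k w) • c w)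
        + dist (∑ w : Fin k → Fin m, emp ω₀ n (Cyl k w) • c w) (∫ x, h x ∂μ) :=
        dist_triangle _ _ _
    _ ≤ dist (birkhoff shift h n ω₀) (∑ w : Fin k → Fin m, emp ω₀ n (Cyl k w) • c w)
        + (dist (∑ w : Fin k → Fin m, emp ω₀ n (Cyl k w) • c w)
            (∑ w : Fin k → Fin m, (μ (Cyl k w)).toReal • c w)
          + dist (∑ w : Fin k → Fin m, (μ (Cyl k w)).toReal • c w) (∫ x, h x ∂μ)) := by
        linarith [dist_triangle (∑ w : Fin k → Fin m, emp ω₀ n (Cyl k w) • c w)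
          (∑ w : Fin k → Fin m, (μ (Cyl k w)).toReal • c w) (∫ x, h x ∂μ)]
    _ < ε := by
        simp only [dist_eq_norm] at hn ⊢
        have h3 : ‖(∑ w : Fin k → Fin m, (μ (Cyl k w)).toReal • c w) - ∫ x, h x ∂μ‖
            = ‖(∫ x, h x ∂μ) - ∑ w : Fin k → Fin m, (μ (Cyl k w)).toReal • c w‖ := by
          rw [← norm_neg, neg_sub]
        rw [h3]
        linarith

end IntegralLemma

/-- **Lemma 4 (Statement 7).** If `X_α ∩ Σ̃ ≠ ∅` then there is an invariant measure
with `∫ f dμ = α` and positive Lyapunov exponent. -/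
theorem statement7 {m d : ℕ} (S : PCSystem m)
    (f : SymbSp m → EuclideanSpace ℝ (Fin d)) (hf : Continuous f)
    (α : EuclideanSpace ℝ (Fin d))
    (hne : (symbLevelSet f α ∩ S.SigmaTilde).Nonempty) :
    ∃ μ ∈ shiftInvMeasures m, (∫ ω, f ω ∂μ) = α ∧ 0 < S.lyapSymb μ := by
  obtain ⟨ω₀, hα, hSig⟩ := hne
  set U : Ultrafilter ℕ := Ultrafilter.of atTop with hUdef
  have hU : ↑U ≤ (atTop : Filter ℕ) := Ultrafilter.of_le _
  set μ := empMeasure U ω₀ with hμ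
  have hprob := empMeasure_isProb U hU ω₀
  refine ⟨μ, ⟨hprob, empMeasure_shiftInv U hU ω₀⟩, ?_, ?_⟩
  · have h1 := tendsto_birkhoff_integral S.hm U hU ω₀ f hf
    have h2 : Tendsto (fun n => birkhoff shift f n ω₀) ↑U (𝓝 α) :=
      Tendsto.mono_left hα hU
    exact tendsto_nhds_unique h1 h2
  · have hg := tendsto_birkhoff_integral S.hm U hU ω₀ S.g S.g_continuous
    set L := atTop.liminf fun n => birkhoff shift S.g n ω₀ with hLdef
    have hL : 0 < L := hSig
    obtain ⟨x₀, -, hmin'⟩ := isCompact_univ.exists_isMinOn ⟨ω₀, mem_univ ω₀⟩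
      S.g_continuous.continuousOn
    have hmin : ∀ y, S.g x₀ ≤ S.g y := fun y => hmin' (mem_univ y)
    have hbound : ∀ n, min (S.g x₀) 0 ≤ birkhoff shift S.g n ω₀ := by
      intro n
      rcases Nat.eq_zero_or_pos n with rfl | hn
      · have : birkhoff shift S.g 0 ω₀ = 0 := by simp [birkhoff]
        rw [this]
        exact min_le_right _ _
      · have hn' : (0:ℝ) < n := by exact_mod_cast hn
        have hsum : (n:ℝ) * S.g x₀ ≤ ∑ j ∈ Finset.range n, S.g (shift^[j] ω₀) := by
          calc (n:ℝ) * S.g x₀ = ∑ _j ∈ Finset.range n, S.g x₀ := by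
                rw [Finset.sum_const, Finset.card_range, nsmul_eq_mul]
            _ ≤ _ := Finset.sum_le_sum fun j _ => hmin _
        have : S.g x₀ ≤ birkhoff shift S.g n ω₀ := by
          rw [birkhoff, smul_eq_mul]
          calc S.g x₀ = (n:ℝ)⁻¹ * ((n:ℝ) * S.g x₀) := by field_simp
            _ ≤ (n:ℝ)⁻¹ * ∑ j ∈ Finset.range n, S.g (shift^[j] ω₀) :=
              mul_le_mul_of_nonneg_left hsum (by positivity)
        exact le_trans (min_le_left _ _) this
    have hbdd : IsBoundedUnder (· ≥ ·) atTop (fun n => birkhoff shift S.g n ω₀) :=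
      ⟨min (S.g x₀) 0, Filter.eventually_map.2 (Eventually.of_forall hbound)⟩
    have hev : ∀ᶠ n in (atTop : Filter ℕ), L/2 < birkhoff shift S.g n ω₀ :=
      eventually_lt_of_lt_liminf (by linarith) hbdd
    have hle : L/2 ≤ ∫ ω, S.g ω ∂μ :=
      ge_of_tendsto hg (hU (hev.mono fun n h => le_of_lt h))
    have : 0 < ∫ ω, S.g ω ∂μ := lt_of_lt_of_le (by linarith) hle
    exact this
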